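/- Let C be an [n,k] linear rank metric code with parity check matrix H, and for 1 ≤ u ≤ n let Δ_u = min{ rank(H·M^T) : M ∈ F_q^{(n−u)×n}, rank(M) = n−u }. Then d_{n−u−Δ_u}(C) ≤ n − u < d_{n−u−Δ_u+1}(C) (whenever these generalized rank weights are defined). -/

import Mathlib

open Matrix

/-- The `r`-th generalized rank weight of a code with parity check matrix `H`:
`d_r(C) = min{ i : ∃ M ∈ F_q^{n×i}, rank M = i, i − r ≥ rank(H·M) }`. -/
noncomputable def genRankWeightPC (Fq : Type*) {Fqm : Type*} [Field Fq] [Field Fqm]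
    [Algebra Fq Fqm] {n k : ℕ} (H : Matrix (Fin (n - k)) (Fin n) Fqm) (r : ℕ) : ℕ :=
  sInf { i | ∃ M : Matrix (Fin n) (Fin i) Fq,
    M.rank = i ∧ (H * M.map (algebraMap Fq Fqm)).rank + r ≤ i }

section Aux

open Module Submodule

/-- Columns of a matrix of full column rank are linearly independent. -/
private lemma aux_cols_li {Fq : Type*} [Field Fq] {n i : ℕ} (M : Matrix (Fin n) (Fin i) Fq)
    (hMr : M.rank = i) : LinearIndependent Fq Mᵀ := by
  show LinearIndependent Fq M.col
  rw [linearIndependent_iff_card_eq_finrank_span, Fintype.card_fin]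
  have := M.rank_eq_finrank_span_cols
  rw [hMr] at this
  exact this

/-- Any linearly independent set of size `i` in `Fq^n` extends to a linearly
independent set of any size `a` with `i ≤ a ≤ n`. -/
private lemma aux_extend {Fq : Type*} [Field Fq] {n i a : ℕ} (s : Set (Fin n → Fq))
    (hs : LinearIndependent Fq ((↑) : s → (Fin n → Fq))) (hcs : s.ncard = i)
    (hia : i ≤ a) (han : a ≤ n) :
    ∃ r : Set (Fin n → Fq), s ⊆ r ∧ r.Finite ∧ r.ncard = a ∧
      LinearIndependent Fq ((↑) : r → (Fin n → Fq)) := by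
  classical
  have hs' : LinearIndepOn Fq id s := hs
  have hst : s ⊆ hs'.extend (Set.subset_univ s) := hs'.subset_extend _
  have hli_t := hs'.linearIndepOn_extend (Set.subset_univ s)
  let B := Basis.extend hs'
  haveI : Fintype (hs'.extend (Set.subset_univ s)) := FiniteDimensional.fintypeBasisIndex B
  have hcard_t : (hs'.extend (Set.subset_univ s)).ncard = n := by
    rw [← Nat.card_coe_set_eq, Nat.card_eq_fintype_card, ← Module.finrank_eq_card_basis B,
      Module.finrank_fin_fun]
  obtain ⟨r, hsr, hrt, hrc⟩ := Set.exists_subsuperset_card_eq (n := a) hst (by omega) (by omega)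
  exact ⟨r, hsr, (Set.toFinite _).subset hrt, hrc, (hli_t.mono hrt : _)⟩

/-- A finite linearly independent set of size `a` is the set of rows of a rank-`a` matrix. -/
private lemma aux_rows_matrix {Fq : Type*} [Field Fq] {n a : ℕ} (r : Set (Fin n → Fq))
    [Fintype r] (hc : Fintype.card r = a)
    (hli : LinearIndependent Fq ((↑) : r → (Fin n → Fq))) :
    ∃ M1 : Matrix (Fin a) (Fin n) Fq, M1.rank = a ∧
      Set.range (M1 : Fin a → Fin n → Fq) = r := by
  let e : Fin a ≃ r := (Fintype.equivFinOfCardEq hc).symm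
  let v : Fin a → (Fin n → Fq) := fun j => (e j : Fin n → Fq)
  have hli_v : LinearIndependent Fq v := hli.comp e e.injective
  have hrange : Set.range v = r := by
    have : v = Subtype.val ∘ e := rfl
    rw [this, Set.range_comp, Equiv.range_eq_univ, Set.image_univ, Subtype.range_coe]
  refine ⟨Matrix.of v, ?_, hrange⟩
  rw [← Matrix.rank_transpose, Matrix.rank_eq_finrank_span_cols, Matrix.col_transpose]
  show finrank Fq (span Fq (Set.range v)) = a
  rw [finrank_span_eq_card hli_v, Fintype.card_fin]

end Aux

/-- Wiretap bound: with
`Δ_u = min{ rank(H·Mᵀ) : M ∈ F_q^{(n−u)×n}, rank M = n−u }`, one has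
`d_{n−u−Δ_u}(C) ≤ n − u < d_{n−u−Δ_u+1}(C)` whenever these weights are defined. -/
theorem wiretap_generalized_weights
    {Fq Fqm : Type*} [Field Fq] [Field Fqm] [Algebra Fq Fqm]
    {n k u : ℕ} (C : Submodule Fqm (Fin n → Fqm))
    (hCk : Module.finrank Fqm C = k)
    (H : Matrix (Fin (n - k)) (Fin n) Fqm)
    (hH : ∀ x, x ∈ C ↔ H.mulVec x = 0)
    (hu1 : 1 ≤ u) (hun : u ≤ n)
    (Δ : ℕ)
    (hΔ : Δ = sInf { w | ∃ M : Matrix (Fin (n - u)) (Fin n) Fq,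
      M.rank = n - u ∧ w = (H * (M.map (algebraMap Fq Fqm)).transpose).rank })
    (hdef1 : 1 ≤ n - u - Δ) (hdef2 : n - u - Δ + 1 ≤ k) :
    genRankWeightPC Fq (k := k) H (n - u - Δ) ≤ n - u ∧
      n - u < genRankWeightPC Fq (k := k) H (n - u - Δ + 1) := by
  classical
  set φ := algebraMap Fq Fqm with hφ
  have haN : n - u ≤ n := Nat.sub_le n u
  -- k ≤ n
  have hkn : k ≤ n := by
    have h1 := Submodule.finrank_le C
    rw [hCk, Module.finrank_fin_fun] at h1
    exact h1
  -- the defining set of Δ is nonempty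
  set M0 : Matrix (Fin (n - u)) (Fin n) Fq :=
    (1 : Matrix (Fin n) (Fin n) Fq).submatrix (Fin.castLE haN) id with hM0
  have hmul : M0 * M0ᵀ = 1 := by
    ext i j
    simp [hM0, Matrix.mul_apply, Matrix.one_apply, Fin.castLE_inj]
  have hrM0 : M0.rank = n - u := by
    refine le_antisymm (by simpa using M0.rank_le_height) ?_
    have := Matrix.rank_mul_le_left M0 M0ᵀ
    rwa [hmul, Matrix.rank_one, Fintype.card_fin] at this
  have hne : { w | ∃ M : Matrix (Fin (n - u)) (Fin n) Fq,
      M.rank = n - u ∧ w = (H * (M.map φ).transpose).rank }.Nonempty :=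
    ⟨_, M0, hrM0, rfl⟩
  obtain ⟨MΔ, hMΔr, hMΔeq⟩ : ∃ M : Matrix (Fin (n - u)) (Fin n) Fq,
      M.rank = n - u ∧ Δ = (H * (M.map φ).transpose).rank := by
    rw [hΔ]; exact Nat.sInf_mem hne
  have hΔlt : Δ < n - u := by omega
  constructor
  · -- first inequality
    apply Nat.sInf_le
    refine ⟨MΔᵀ, by rw [Matrix.rank_transpose]; exact hMΔr, ?_⟩
    rw [Matrix.transpose_map, ← hMΔeq]
    omega
  · -- second inequality
    set r1 := n - u - Δ + 1 with hr1
    set S := { i | ∃ M : Matrix (Fin n) (Fin i) Fq,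
      M.rank = i ∧ (H * M.map φ).rank + r1 ≤ i } with hS
    have hSne : S.Nonempty := by
      refine ⟨n, 1, by rw [Matrix.rank_one, Fintype.card_fin], ?_⟩
      have h1 : (1 : Matrix (Fin n) (Fin n) Fq).map φ = 1 :=
        Matrix.map_one _ (map_zero _) (map_one _)
      rw [h1, Matrix.mul_one]
      have := H.rank_le_height
      omega
    have hmem := Nat.sInf_mem hSne
    have hgw : genRankWeightPC Fq (k := k) H (n - u - Δ + 1) = sInf S := rfl
    rw [hgw]
    by_contra hcon
    push_neg at hcon
    set m := sInf S with hm
    obtain ⟨M, hMr, hMle⟩ := hmem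
    -- columns of M are linearly independent
    have hcol : LinearIndependent Fq Mᵀ := aux_cols_li M hMr
    have hrM : (H * M.map φ).rank + r1 ≤ m := hMle
    have hmle : m ≤ n - u := hcon
    -- extend the column set to an independent set of size n - u
    have hs_li : LinearIndependent Fq ((↑) : Set.range Mᵀ → (Fin n → Fq)) :=
      (linearIndepOn_id_range_iff hcol.injective).mpr hcol
    have hcs : (Set.range Mᵀ).ncard = m := by
      rw [← Nat.card_coe_set_eq, Nat.card_range_of_injective hcol.injective,
        Nat.card_eq_fintype_card, Fintype.card_fin]
    obtain ⟨r, hsr, hrfin, hrcard, hli_r⟩ :=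
      aux_extend (Set.range Mᵀ) hs_li hcs hmle haN
    haveI : Fintype r := hrfin.fintype
    have hcard_r : Fintype.card r = n - u := by
      rw [← Nat.card_eq_fintype_card, Nat.card_coe_set_eq, hrcard]
    obtain ⟨M1, hrankM1, hrangeM1⟩ := aux_rows_matrix r hcard_r hli_r
    -- Δ is a lower bound for the rank of H * (M1.map φ)ᵀ
    have hΔle1 : Δ ≤ (H * (M1.map φ)ᵀ).rank := by
      rw [hΔ]; exact Nat.sInf_le ⟨M1, hrankM1, rfl⟩
    -- identify columns
    set f : (Fin n → Fq) → (Fin (n - k) → Fqm) :=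
      fun w => H.mulVec (fun y => φ (w y)) with hf
    have hAcols : (H * (M1.map φ)ᵀ)ᵀ = f ∘ (M1 : Fin (n - u) → Fin n → Fq) := by
      ext j x
      simp [hf, Matrix.mul_apply, Matrix.mulVec, dotProduct]; rfl
    have hBcols : (H * M.map φ)ᵀ = f ∘ Mᵀ := by
      ext j x
      simp [hf, Matrix.mul_apply, Matrix.mulVec, dotProduct]; rfl
    have h1 : (H * (M1.map φ)ᵀ).rank =
        Module.finrank Fqm (Submodule.span Fqm (f '' r)) := by
      rw [Matrix.rank_eq_finrank_span_cols, (show (H * (M1.map φ)ᵀ).col = _ from hAcols), Set.range_comp (g := f) (f := (M1 : Fin (n - u) → Fin n → Fq)), hrangeM1]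
    have h2 : (H * M.map φ).rank =
        Module.finrank Fqm (Submodule.span Fqm (f '' Set.range Mᵀ)) := by
      rw [Matrix.rank_eq_finrank_span_cols, (show (H * M.map φ).col = _ from hBcols), Set.range_comp (g := f) (f := (Mᵀ : Fin m → Fin n → Fq))]
    -- split the spanning set
    have hsplit : f '' r = (f '' Set.range Mᵀ) ∪ (f '' (r \ Set.range Mᵀ)) := by
      rw [← Set.image_union, Set.union_diff_cancel hsr]
    have hb1 : Module.finrank Fqm (Submodule.span Fqm (f '' r)) ≤
        Module.finrank Fqm (Submodule.span Fqm (f '' Set.range Mᵀ)) +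
          Module.finrank Fqm (Submodule.span Fqm (f '' (r \ Set.range Mᵀ))) := by
      rw [hsplit, Submodule.span_union]
      have := Submodule.finrank_sup_add_finrank_inf_eq
        (Submodule.span Fqm (f '' Set.range Mᵀ))
        (Submodule.span Fqm (f '' (r \ Set.range Mᵀ)))
      omega
    have hb2 : Module.finrank Fqm (Submodule.span Fqm (f '' (r \ Set.range Mᵀ))) ≤
        (n - u) - m := by
      haveI : Fintype ↥(f '' (r \ Set.range Mᵀ)) :=
        ((hrfin.diff).image f).fintype
      refine le_trans (finrank_span_le_card _) ?_
      have hle1 : (f '' (r \ Set.range Mᵀ)).toFinset.card =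
          (f '' (r \ Set.range Mᵀ)).ncard := by
        rw [Set.ncard_eq_toFinset_card']
      rw [hle1]
      calc (f '' (r \ Set.range Mᵀ)).ncard ≤ (r \ Set.range Mᵀ).ncard :=
            Set.ncard_image_le (hrfin.diff)
        _ = r.ncard - (Set.range Mᵀ).ncard := Set.ncard_diff hsr (Set.finite_range Mᵀ)
        _ = (n - u) - m := by rw [hrcard, hcs]
    omega
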